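/- Let X and Y be finite point sets with a metric d on X ∪ Y, let α ≥ 1, let P ⊆ X have at least two points, and let 0 < λ < 1 and γ ≥ 1. Let 𝒪 be a cover of P (a finite collection of balls centered at points of Y whose union contains P) such that: (i) 𝒪 has minimum cost among all covers of P by balls centered at points of Y; (ii) every ball of 𝒪 intersects P; and (iii) every ball of 𝒪 has radius strictly less than 2α·diam(P)/λ. Then the number of balls in 𝒪 of radius at least diam(P)/γ is at most (9αγ/λ)^α. -/

import Mathlib

open scoped Classical

/-- Structure lemma for MCC.  Let `X` (clients) and `Y` (servers) be finite
point sets in a metric space `W` (playing the role of `X ∪ Y`), let `α ≥ 1`,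
`P ⊆ X` with at least two points, `0 < λ < 1` and `γ ≥ 1`.  A cover of `P` is
a finite collection of balls (encoded as center–radius pairs) with centers in
`Y` and nonnegative radii whose union contains `P`; its cost is the sum of the
`α`-th powers of the radii.  If `𝒪` is a cover of `P` of minimum cost, every
ball of `𝒪` intersects `P`, and every ball of `𝒪` has radius strictly less
than `2α·diam(P)/λ`, then the number of balls in `𝒪` of radius at least
`diam(P)/γ` is at most `(9αγ/λ)^α`. -/
theorem mcc_structure_lemma
    {W : Type*} [MetricSpace W] (X Y : Finset W) (α : ℝ) (hα : 1 ≤ α)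
    (P : Finset W) (hPX : P ⊆ X) (hP : 2 ≤ P.card)
    (lam γ : ℝ) (hlam0 : 0 < lam) (hlam1 : lam < 1) (hγ : 1 ≤ γ)
    (O : Finset (W × ℝ))
    (hOballs : ∀ br ∈ O, br.1 ∈ Y ∧ 0 ≤ br.2)
    (hOcover : ∀ x ∈ P, ∃ br ∈ O, dist x br.1 ≤ br.2)
    (hOopt : ∀ O' : Finset (W × ℝ),
      (∀ br ∈ O', br.1 ∈ Y ∧ 0 ≤ br.2) →
      (∀ x ∈ P, ∃ br ∈ O', dist x br.1 ≤ br.2) →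
      (∑ br ∈ O, br.2 ^ α) ≤ ∑ br ∈ O', br.2 ^ α)
    (hOmeets : ∀ br ∈ O, ∃ x ∈ P, dist x br.1 ≤ br.2)
    (hOsmall : ∀ br ∈ O, br.2 < 2 * α * Metric.diam (P : Set W) / lam) :
    ((O.filter (fun br => Metric.diam (P : Set W) / γ ≤ br.2)).card : ℝ)
      ≤ (9 * α * γ / lam) ^ α := by
  set D := Metric.diam (P : Set W) with hDdef
  have hγ0 : (0 : ℝ) < γ := lt_of_lt_of_le one_pos hγ
  have hα0 : (0 : ℝ) < α := lt_of_lt_of_le one_pos hα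
  -- D > 0
  obtain ⟨a, haP, b, hbP, hab⟩ := Finset.one_lt_card.mp hP
  have hbdd : Bornology.IsBounded (P : Set W) := (P.finite_toSet).isBounded
  have hD0 : 0 < D := by
    have h1 : dist a b ≤ D := Metric.dist_le_diam_of_mem hbdd (by exact_mod_cast haP) (by exact_mod_cast hbP)
    have h2 : 0 < dist a b := dist_pos.mpr hab
    linarith
  -- distances within P bounded by D
  have hdistP : ∀ x ∈ P, ∀ z ∈ P, dist x z ≤ D := fun x hx z hz =>
    Metric.dist_le_diam_of_mem hbdd (by exact_mod_cast hx) (by exact_mod_cast hz)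
  -- pick a ball containing a
  obtain ⟨br0, hbr0O, hbr0⟩ := hOcover a haP
  set y := br0.1
  set r := br0.2
  have hy : y ∈ Y := (hOballs br0 hbr0O).1
  have hr : 0 ≤ r := (hOballs br0 hbr0O).2
  set R := r + D with hRdef
  have hR0 : 0 ≤ R := by positivity
  -- single-ball cover bound on the cost
  have hcost : (∑ br ∈ O, br.2 ^ α) ≤ R ^ α := by
    have := hOopt {(y, R)}
      (by
        intro br hbr
        rw [Finset.mem_singleton] at hbr
        subst hbr
        exact ⟨hy, hR0⟩)
      (by
        intro x hx
        refine ⟨(y, R), Finset.mem_singleton_self _, ?_⟩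
        have h1 : dist x y ≤ dist x a + dist a y := dist_triangle x a y
        have h2 : dist x a ≤ D := hdistP x hx a haP
        simp only
        linarith [hbr0])
    simpa using this
  -- R ≤ 3αD/λ
  have hrsmall : r * lam < 2 * α * D := (lt_div_iff₀ hlam0).mp (hOsmall br0 hbr0O)
  have hR3 : R ≤ 3 * α * D / lam := by
    rw [le_div_iff₀ hlam0]
    nlinarith [hD0.le, mul_le_mul_of_nonneg_left hlam1.le hD0.le]
  -- counting
  set F := O.filter (fun br => D / γ ≤ br.2) with hFdef
  have hDγ : 0 < D / γ := div_pos hD0 hγ0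
  have h1 : (F.card : ℝ) * (D / γ) ^ α ≤ ∑ br ∈ F, br.2 ^ α := by
    have := Finset.card_nsmul_le_sum F (fun br => br.2 ^ α) ((D / γ) ^ α)
      (fun br hbr => by
        have hmem := Finset.mem_filter.mp hbr
        exact Real.rpow_le_rpow hDγ.le hmem.2 hα0.le)
    simpa [nsmul_eq_mul] using this
  have h2 : (∑ br ∈ F, br.2 ^ α) ≤ ∑ br ∈ O, br.2 ^ α :=
    Finset.sum_le_sum_of_subset_of_nonneg (Finset.filter_subset _ _)
      (fun br hbr _ => Real.rpow_nonneg (hOballs br hbr).2 α)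
  have hR9 : R ^ α ≤ (9 * α * γ / lam) ^ α * (D / γ) ^ α := by
    rw [← Real.mul_rpow (by positivity) hDγ.le]
    apply Real.rpow_le_rpow hR0 _ hα0.le
    have : 9 * α * γ / lam * (D / γ) = 9 * α * D / lam := by
      field_simp
    rw [this]
    refine hR3.trans ?_
    gcongr
    nlinarith
  have hpos : 0 < (D / γ) ^ α := Real.rpow_pos_of_pos hDγ α
  have hchain : (F.card : ℝ) * (D / γ) ^ α ≤ (9 * α * γ / lam) ^ α * (D / γ) ^ α :=
    le_trans h1 (le_trans h2 (le_trans hcost hR9))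
  exact le_of_mul_le_mul_right hchain hpos
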